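/- arXiv:1906.11536 — 5 statements merged into one kernel-verified Lean document; each statement's English description precedes it below -/
import Mathlib

section
/- Let (S, 𝒜) be a measurable space, Q a probability measure on S, and f : S × S → ℝ a measurable function such that f is square-integrable with respect to Q ⊗ Q and the diagonal map x ↦ f(x,x) is square-integrable with respect to Q. Let (X_i)_{i≥1} be an i.i.d. sequence of S-valued random variables with common law Q, defined on a probability space (Ω, ℱ, ℙ). Then there exists a constant C ≥ 0 such that for every n ≥ 1, E[ ( (1/n²) Σ_{i=1}^n Σ_{j=1}^n f(X_i, X_j) − ∫∫ f(x,y) dQ(x) dQ(y) )² ] ≤ C / n. In particular, the U-statistic (1/n²) Σ_{i,j≤n} f(X_i,X_j) converges to ∫∫ f dQ⊗Q in L²(ℙ) as n → ∞. -/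
open MeasureTheory ProbabilityTheory Filter

private lemma memL2_integrable_mul {α : Type*} [MeasurableSpace α] {μ : Measure α}
    {u v : α → ℝ} (hu : MemLp u 2 μ) (hv : MemLp v 2 μ) :
    Integrable (fun x => u x * v x) μ := by
  rw [← memLp_one_iff_integrable]
  refine ⟨hu.1.mul hv.1, ?_⟩
  have h := eLpNorm_le_eLpNorm_mul_eLpNorm'_of_norm (p := 2) (q := 2) (r := 1) hu.1 hv.1
    (· * ·) 1 (Filter.Eventually.of_forall fun x => by simp [norm_mul])
  simp only [ENNReal.coe_one, one_mul] at h
  exact lt_of_le_of_lt h (ENNReal.mul_lt_top hu.2 hv.2)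

private lemma abs_integral_mul_le_half {α : Type*} [MeasurableSpace α] {μ : Measure α}
    {u v : α → ℝ} (hu : MemLp u 2 μ) (hv : MemLp v 2 μ) :
    |∫ x, u x * v x ∂μ| ≤ ((∫ x, u x ^ 2 ∂μ) + ∫ x, v x ^ 2 ∂μ) / 2 := by
  have hi : Integrable (fun x => u x * v x) μ := memL2_integrable_mul hu hv
  have h1 : |∫ x, u x * v x ∂μ| ≤ ∫ x, |u x * v x| ∂μ := by
    simpa [Real.norm_eq_abs, abs_mul] using norm_integral_le_integral_norm (fun x => u x * v x) (μ := μ)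
  have h2 : ∫ x, |u x * v x| ∂μ ≤ ∫ x, (u x ^ 2 + v x ^ 2) / 2 ∂μ := by
    refine integral_mono hi.abs ((hu.integrable_sq.add hv.integrable_sq).div_const 2) fun x => ?_
    have := abs_mul (u x) (v x)
    nlinarith [sq_nonneg (|u x| - |v x|), sq_abs (u x), sq_abs (v x), abs_nonneg (u x * v x)]
  have h3 : ∫ x, (u x ^ 2 + v x ^ 2) / 2 ∂μ
      = ((∫ x, u x ^ 2 ∂μ) + ∫ x, v x ^ 2 ∂μ) / 2 := by
    rw [integral_div, integral_add hu.integrable_sq hv.integrable_sq]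
  linarith

/-- For an i.i.d. sequence `X` with law `Q` and a square-integrable
(with square-integrable diagonal) measurable `f : S × S → ℝ`, the variance of the
normalized double sum `(1/n²) ∑ᵢ∑ⱼ f(Xᵢ, Xⱼ)` around `∫∫ f dQ dQ` is `O(1/n)`;
in particular the U-statistic converges to `∫∫ f dQ dQ` in `L²`. -/
theorem ustatistic_L2_rate
    {S : Type*} [MeasurableSpace S] (Q : Measure S) [IsProbabilityMeasure Q]
    (f : S × S → ℝ) (hf : Measurable f)
    (hf2 : MemLp f 2 (Q.prod Q))
    (hdiag : MemLp (fun x => f (x, x)) 2 Q)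
    {Ω : Type*} [MeasurableSpace Ω] (Pr : Measure Ω) [IsProbabilityMeasure Pr]
    (X : ℕ → Ω → S) (hX : ∀ i, Measurable (X i))
    (hindep : iIndepFun X Pr)
    (hlaw : ∀ i, Measure.map (X i) Pr = Q) :
    (∃ C : ℝ, 0 ≤ C ∧ ∀ n : ℕ, 1 ≤ n →
        ∫ ω, ((n : ℝ)⁻¹ ^ 2 *
              ∑ i ∈ Finset.range n, ∑ j ∈ Finset.range n, f (X i ω, X j ω)
            - ∫ x, ∫ y, f (x, y) ∂Q ∂Q) ^ 2 ∂Pr ≤ C / n) ∧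
    Tendsto (fun n : ℕ =>
        ∫ ω, ((n : ℝ)⁻¹ ^ 2 *
              ∑ i ∈ Finset.range n, ∑ j ∈ Finset.range n, f (X i ω, X j ω)
            - ∫ x, ∫ y, f (x, y) ∂Q ∂Q) ^ 2 ∂Pr) atTop (nhds 0) := by
  classical
  set m : ℝ := ∫ x, ∫ y, f (x, y) ∂Q ∂Q with hm
  have hfint : Integrable f (Q.prod Q) := hf2.integrable one_le_two
  have hm' : ∫ p, f p ∂(Q.prod Q) = m := by
    rw [MeasureTheory.integral_prod _ hfint]
  set g : S × S → ℝ := fun p => f p - m with hgdef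
  have hgmeas : Measurable g := hf.sub measurable_const
  have hg2 : MemLp g 2 (Q.prod Q) := hf2.sub (memLp_const m)
  have hgd : MemLp (fun x => g (x, x)) 2 Q := hdiag.sub (memLp_const m)
  have hgint0 : ∫ p, g p ∂(Q.prod Q) = 0 := by
    simp only [hgdef]
    rw [integral_sub hfint (integrable_const m), hm', integral_const]
    simp
  have hpair_meas : ∀ i j : ℕ, Measurable fun ω => (X i ω, X j ω) :=
    fun i j => (hX i).prodMk (hX j)
  have hlaw_ne : ∀ i j : ℕ, i ≠ j →
      Measure.map (fun ω => (X i ω, X j ω)) Pr = Q.prod Q := by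
    intro i j hij
    have h := hindep.indepFun hij
    rw [indepFun_iff_map_prod_eq_prod_map_map (hX i).aemeasurable (hX j).aemeasurable] at h
    rw [h, hlaw i, hlaw j]
  set Y : ℕ × ℕ → Ω → ℝ := fun p ω => g (X p.1 ω, X p.2 ω) with hYdef
  have hYmeas : ∀ p : ℕ × ℕ, Measurable (Y p) := fun p => hgmeas.comp (hpair_meas p.1 p.2)
  have hY2 : ∀ p : ℕ × ℕ, MemLp (Y p) 2 Pr := by
    rintro ⟨i, j⟩
    rcases eq_or_ne i j with h | h
    · subst h
      exact hgd.comp_measurePreserving ⟨hX i, hlaw i⟩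
    · exact hg2.comp_measurePreserving ⟨hpair_meas i j, hlaw_ne i j h⟩
  have hEzero : ∀ i j : ℕ, i ≠ j → ∫ ω, Y (i, j) ω ∂Pr = 0 := by
    intro i j hij
    have h : ∫ ω, Y (i, j) ω ∂Pr = ∫ p, g p ∂(Q.prod Q) := by
      rw [← hlaw_ne i j hij,
        integral_map (hpair_meas i j).aemeasurable hgmeas.aestronglyMeasurable]
    rw [h, hgint0]
  set K2 : ℝ := max (∫ p, g p ^ 2 ∂(Q.prod Q)) (∫ x, g (x, x) ^ 2 ∂Q) with hK2def
  have hK2 : 0 ≤ K2 :=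
    le_trans (integral_nonneg fun p => sq_nonneg _) (le_max_left _ _)
  have hsq : ∀ p : ℕ × ℕ, ∫ ω, Y p ω ^ 2 ∂Pr ≤ K2 := by
    rintro ⟨i, j⟩
    rcases eq_or_ne i j with h | h
    · subst h
      have h1 : ∫ ω, Y (i, i) ω ^ 2 ∂Pr = ∫ x, g (x, x) ^ 2 ∂Q := by
        rw [← hlaw i, integral_map (hX i).aemeasurable]
        exact ((hgmeas.comp (measurable_id.prodMk measurable_id)).pow_const 2).aestronglyMeasurable
      rw [h1]; exact le_max_right _ _
    · have h1 : ∫ ω, Y (i, j) ω ^ 2 ∂Pr = ∫ p, g p ^ 2 ∂(Q.prod Q) := by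
        rw [← hlaw_ne i j h, integral_map (hpair_meas i j).aemeasurable]
        exact (hgmeas.pow_const 2).aestronglyMeasurable
      rw [h1]; exact le_max_left _ _
  have hTbound : ∀ p q : ℕ × ℕ, ∫ ω, Y p ω * Y q ω ∂Pr ≤ K2 := by
    intro p q
    have h1 := abs_integral_mul_le_half (hY2 p) (hY2 q)
    have h2 := hsq p
    have h3 := hsq q
    have := le_abs_self (∫ ω, Y p ω * Y q ω ∂Pr)
    linarith
  have hvanish : ∀ i j k l : ℕ, k ≠ i → k ≠ j → l ≠ i → l ≠ j → (i ≠ j ∨ k ≠ l) →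
      ∫ ω, Y (i, j) ω * Y (k, l) ω ∂Pr = 0 := by
    intro i j k l hki hkj hli hlj hor
    have hind : IndepFun (Y (i, j)) (Y (k, l)) Pr :=
      (hindep.indepFun_prodMk_prodMk hX i j k l (Ne.symm hki) (Ne.symm hli)
        (Ne.symm hkj) (Ne.symm hlj)).comp hgmeas hgmeas
    have heq : ∫ ω, Y (i, j) ω * Y (k, l) ω ∂Pr
        = (∫ ω, Y (i, j) ω ∂Pr) * ∫ ω, Y (k, l) ω ∂Pr :=
      hind.integral_mul_eq_mul_integral (hYmeas _).aestronglyMeasurable (hYmeas _).aestronglyMeasurable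
    rcases hor with h | h
    · rw [heq, hEzero i j h, zero_mul]
    · rw [heq, hEzero k l h, mul_zero]
  have key : ∀ n : ℕ, 1 ≤ n →
      ∫ ω, ((n : ℝ)⁻¹ ^ 2 *
            ∑ i ∈ Finset.range n, ∑ j ∈ Finset.range n, f (X i ω, X j ω) - m) ^ 2 ∂Pr
        ≤ (5 * K2) / n := by
    intro n hn
    have hn0 : (n : ℝ) ≠ 0 := Nat.cast_ne_zero.mpr (by omega)
    set s : Finset (ℕ × ℕ) := Finset.range n ×ˢ Finset.range n with hsdef
    have hrepr : ∀ ω, ((n : ℝ)⁻¹ ^ 2 *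
          ∑ i ∈ Finset.range n, ∑ j ∈ Finset.range n, f (X i ω, X j ω) - m)
        = (n : ℝ)⁻¹ ^ 2 * ∑ p ∈ s, Y p ω := by
      intro ω
      have h1 : ∑ p ∈ s, Y p ω
          = (∑ i ∈ Finset.range n, ∑ j ∈ Finset.range n, f (X i ω, X j ω)) - (n : ℝ) ^ 2 * m := by
        rw [hsdef, Finset.sum_product]
        have hterm : ∀ i j : ℕ, Y (i, j) ω = f (X i ω, X j ω) - m := fun i j => rfl
        simp only [hterm, Finset.sum_sub_distrib, Finset.sum_const, Finset.card_range,
          nsmul_eq_mul]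
        ring
      rw [h1]
      field_simp
    have hint : ∀ p q : ℕ × ℕ, Integrable (fun ω => Y p ω * Y q ω) Pr :=
      fun p q => memL2_integrable_mul (hY2 p) (hY2 q)
    have hswap : ∫ ω, ((n : ℝ)⁻¹ ^ 2 * ∑ p ∈ s, Y p ω) ^ 2 ∂Pr
        = ((n : ℝ)⁻¹ ^ 2) ^ 2 * ∑ p ∈ s, ∑ q ∈ s, ∫ ω, Y p ω * Y q ω ∂Pr := by
      have h2 : ∀ ω, ((n : ℝ)⁻¹ ^ 2 * ∑ p ∈ s, Y p ω) ^ 2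
          = ((n : ℝ)⁻¹ ^ 2) ^ 2 * ∑ p ∈ s, ∑ q ∈ s, Y p ω * Y q ω := by
        intro ω
        rw [mul_pow, sq (∑ p ∈ s, Y p ω), Finset.sum_mul_sum]
      simp_rw [h2]
      rw [integral_const_mul,
        integral_finset_sum _ (fun p _ => integrable_finset_sum _ fun q _ => hint p q)]
      congr 1
      exact Finset.sum_congr rfl fun p _ => integral_finset_sum _ fun q _ => hint p q
    -- counting
    have hsum : ∑ p ∈ s, ∑ q ∈ s, ∫ ω, Y p ω * Y q ω ∂Pr ≤ 5 * (n : ℝ) ^ 3 * K2 := by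
      rw [← Finset.sum_product']
      set Bad : (ℕ × ℕ) × ℕ × ℕ → Prop := fun r =>
        r.2.1 = r.1.1 ∨ r.2.1 = r.1.2 ∨ r.2.2 = r.1.1 ∨ r.2.2 = r.1.2 ∨
          (r.1.1 = r.1.2 ∧ r.2.1 = r.2.2) with hBaddef
      have hzero : ∀ r ∈ s ×ˢ s, (∫ ω, Y r.1 ω * Y r.2 ω ∂Pr) ≠ 0 → Bad r := by
        rintro ⟨⟨i, j⟩, ⟨k, l⟩⟩ _ hne
        by_contra hbad
        simp only [hBaddef, not_or, not_and] at hbad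
        obtain ⟨h1, h2, h3, h4, h5⟩ := hbad
        refine hne (hvanish i j k l h1 h2 h3 h4 ?_)
        by_cases hij : i = j
        · exact Or.inr (h5 hij)
        · exact Or.inl hij
      rw [← Finset.sum_filter_of_ne hzero]
      have hcard : (((s ×ˢ s).filter Bad).card : ℝ) ≤ 5 * (n : ℝ) ^ 3 := by
        have hsplit : ((s ×ˢ s).filter Bad).card ≤ 5 * n ^ 3 := by
          have hn3 : (Finset.range n ×ˢ Finset.range n ×ˢ Finset.range n).card = n ^ 3 := by
            simp [Finset.card_product]; ring
          have hn2 : (Finset.range n ×ˢ Finset.range n).card = n ^ 2 := by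
            simp [Finset.card_product]; ring
          set F1 : Finset ((ℕ × ℕ) × ℕ × ℕ) := (s ×ˢ s).filter (fun r => r.2.1 = r.1.1) with hF1
          set F2 : Finset ((ℕ × ℕ) × ℕ × ℕ) := (s ×ˢ s).filter (fun r => r.2.1 = r.1.2) with hF2
          set F3 : Finset ((ℕ × ℕ) × ℕ × ℕ) := (s ×ˢ s).filter (fun r => r.2.2 = r.1.1) with hF3
          set F4 : Finset ((ℕ × ℕ) × ℕ × ℕ) := (s ×ˢ s).filter (fun r => r.2.2 = r.1.2) with hF4
          set F5 : Finset ((ℕ × ℕ) × ℕ × ℕ) :=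
            (s ×ˢ s).filter (fun r => r.1.1 = r.1.2 ∧ r.2.1 = r.2.2) with hF5
          have hb1 : F1.card ≤ n ^ 3 := by
            rw [hF1, ← hn3]
            apply Finset.card_le_card_of_injOn (fun r => (r.1.1, r.1.2, r.2.2))
            · intro r hr; rcases r with ⟨⟨i, j⟩, k, l⟩
              simp only [hsdef, Finset.mem_coe, Finset.mem_filter, Finset.mem_product] at hr ⊢
              exact ⟨hr.1.1.1, hr.1.1.2, hr.1.2.2⟩
            · rintro ⟨⟨i, j⟩, k, l⟩ hr ⟨⟨i', j'⟩, k', l'⟩ hr' h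
              simp only [Finset.coe_filter, Set.mem_setOf_eq] at hr hr'
              simp only [Prod.mk.injEq] at h ⊢
              obtain ⟨e1, e2, e3⟩ := h
              have := hr.2; have := hr'.2
              omega
          have hb2 : F2.card ≤ n ^ 3 := by
            rw [hF2, ← hn3]
            apply Finset.card_le_card_of_injOn (fun r => (r.1.1, r.1.2, r.2.2))
            · intro r hr; rcases r with ⟨⟨i, j⟩, k, l⟩
              simp only [hsdef, Finset.mem_coe, Finset.mem_filter, Finset.mem_product] at hr ⊢
              exact ⟨hr.1.1.1, hr.1.1.2, hr.1.2.2⟩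
            · rintro ⟨⟨i, j⟩, k, l⟩ hr ⟨⟨i', j'⟩, k', l'⟩ hr' h
              simp only [Finset.coe_filter, Set.mem_setOf_eq] at hr hr'
              simp only [Prod.mk.injEq] at h ⊢
              obtain ⟨e1, e2, e3⟩ := h
              have := hr.2; have := hr'.2
              omega
          have hb3 : F3.card ≤ n ^ 3 := by
            rw [hF3, ← hn3]
            apply Finset.card_le_card_of_injOn (fun r => (r.1.1, r.1.2, r.2.1))
            · intro r hr; rcases r with ⟨⟨i, j⟩, k, l⟩
              simp only [hsdef, Finset.mem_coe, Finset.mem_filter, Finset.mem_product] at hr ⊢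
              exact ⟨hr.1.1.1, hr.1.1.2, hr.1.2.1⟩
            · rintro ⟨⟨i, j⟩, k, l⟩ hr ⟨⟨i', j'⟩, k', l'⟩ hr' h
              simp only [Finset.coe_filter, Set.mem_setOf_eq] at hr hr'
              simp only [Prod.mk.injEq] at h ⊢
              obtain ⟨e1, e2, e3⟩ := h
              have := hr.2; have := hr'.2
              omega
          have hb4 : F4.card ≤ n ^ 3 := by
            rw [hF4, ← hn3]
            apply Finset.card_le_card_of_injOn (fun r => (r.1.1, r.1.2, r.2.1))
            · intro r hr; rcases r with ⟨⟨i, j⟩, k, l⟩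
              simp only [hsdef, Finset.mem_coe, Finset.mem_filter, Finset.mem_product] at hr ⊢
              exact ⟨hr.1.1.1, hr.1.1.2, hr.1.2.1⟩
            · rintro ⟨⟨i, j⟩, k, l⟩ hr ⟨⟨i', j'⟩, k', l'⟩ hr' h
              simp only [Finset.coe_filter, Set.mem_setOf_eq] at hr hr'
              simp only [Prod.mk.injEq] at h ⊢
              obtain ⟨e1, e2, e3⟩ := h
              have := hr.2; have := hr'.2
              omega
          have hb5 : F5.card ≤ n ^ 3 := by
            have h52 : F5.card ≤ n ^ 2 := by
              rw [hF5, ← hn2]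
              apply Finset.card_le_card_of_injOn (fun r => (r.1.1, r.2.1))
              · intro r hr; rcases r with ⟨⟨i, j⟩, k, l⟩
                simp only [hsdef, Finset.mem_coe, Finset.mem_filter, Finset.mem_product] at hr ⊢
                exact ⟨hr.1.1.1, hr.1.2.1⟩
              · rintro ⟨⟨i, j⟩, k, l⟩ hr ⟨⟨i', j'⟩, k', l'⟩ hr' h
                simp only [Finset.coe_filter, Set.mem_setOf_eq] at hr hr'
                simp only [Prod.mk.injEq] at h ⊢
                obtain ⟨e1, e2⟩ := h
                obtain ⟨d1, d2⟩ := hr.2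
                obtain ⟨d1', d2'⟩ := hr'.2
                omega
            exact le_trans h52 (Nat.pow_le_pow_right hn (by norm_num))
          have hsub : (s ×ˢ s).filter Bad ⊆ F1 ∪ F2 ∪ F3 ∪ F4 ∪ F5 := by
            intro r hr
            simp only [hF1, hF2, hF3, hF4, hF5, Finset.mem_union, Finset.mem_filter,
              hBaddef] at hr ⊢
            tauto
          refine le_trans (Finset.card_le_card hsub) ?_
          refine le_trans (Finset.card_union_le _ _) ?_
          refine le_trans (Nat.add_le_add_right (Finset.card_union_le _ _) _) ?_
          refine le_trans (Nat.add_le_add_right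
            (Nat.add_le_add_right (Finset.card_union_le _ _) _) _) ?_
          refine le_trans (Nat.add_le_add_right (Nat.add_le_add_right
            (Nat.add_le_add_right (Finset.card_union_le _ _) _) _) _) ?_
          have e5 : 5 * n ^ 3 = n ^ 3 + n ^ 3 + n ^ 3 + n ^ 3 + n ^ 3 := by ring
          rw [e5]
          exact Nat.add_le_add (Nat.add_le_add (Nat.add_le_add
            (Nat.add_le_add hb1 hb2) hb3) hb4) hb5
        calc (((s ×ˢ s).filter Bad).card : ℝ) ≤ ((5 * n ^ 3 : ℕ) : ℝ) := by exact_mod_cast hsplit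
          _ = 5 * (n : ℝ) ^ 3 := by push_cast; ring
      calc ∑ r ∈ (s ×ˢ s).filter Bad, ∫ ω, Y r.1 ω * Y r.2 ω ∂Pr
          ≤ ∑ _r ∈ (s ×ˢ s).filter Bad, K2 :=
            Finset.sum_le_sum fun r _ => hTbound r.1 r.2
        _ = (((s ×ˢ s).filter Bad).card : ℝ) * K2 := by
            rw [Finset.sum_const, nsmul_eq_mul]
        _ ≤ 5 * (n : ℝ) ^ 3 * K2 := mul_le_mul_of_nonneg_right hcard hK2
    calc ∫ ω, ((n : ℝ)⁻¹ ^ 2 *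
            ∑ i ∈ Finset.range n, ∑ j ∈ Finset.range n, f (X i ω, X j ω) - m) ^ 2 ∂Pr
        = ((n : ℝ)⁻¹ ^ 2) ^ 2 * ∑ p ∈ s, ∑ q ∈ s, ∫ ω, Y p ω * Y q ω ∂Pr := by
          simp_rw [hrepr]; exact hswap
      _ ≤ ((n : ℝ)⁻¹ ^ 2) ^ 2 * (5 * (n : ℝ) ^ 3 * K2) :=
          mul_le_mul_of_nonneg_left hsum (by positivity)
      _ = (5 * K2) / n := by field_simp
  refine ⟨⟨5 * K2, by linarith, key⟩, ?_⟩
  refine squeeze_zero' (Eventually.of_forall fun n => integral_nonneg fun ω => sq_nonneg _)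
    (eventually_atTop.2 ⟨1, fun n hn => key n hn⟩)
    (tendsto_const_div_atTop_nhds_zero_nat (5 * K2))
end

section
/- Let (S, 𝒜) be a measurable space, Q a probability measure on S, and f : S × S → ℝ a measurable function such that f is square-integrable with respect to Q ⊗ Q and x ↦ f(x,x) is square-integrable with respect to Q. Then there exists a sequence (μ_n)_{n≥1} of probability measures on S, where each μ_n is a uniform measure on n (not necessarily distinct) points of S, i.e. μ_n = (1/n) Σ_{i=1}^n δ_{x_i^{(n)}} for some points x_1^{(n)},…,x_n^{(n)} ∈ S, such that ∫∫ f(x,y) dμ_n(x) dμ_n(y) → ∫∫ f(x,y) dQ(x) dQ(y) as n → ∞. -/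
open MeasureTheory Filter
open scoped ENNReal

namespace EmpiricalAux

variable {S : Type*} [MeasurableSpace S]

lemma pi_inter_eval (Q : Measure S) [IsProbabilityMeasure Q] {n : ℕ}
    (T : Finset (Fin n)) (A : Fin n → Set S) :
    Measure.pi (fun _ : Fin n => Q) (⋂ i ∈ T, (fun ω : Fin n → S => ω i) ⁻¹' A i)
      = ∏ i ∈ T, Q (A i) := by
  classical
  have hset : (⋂ i ∈ T, (fun ω : Fin n → S => ω i) ⁻¹' A i)
      = Set.pi Set.univ (fun k => if k ∈ T then A k else Set.univ) := by
    ext ω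
    simp only [Set.mem_iInter, Set.mem_preimage, Set.mem_pi, Set.mem_univ, true_implies]
    constructor
    · intro h k
      split_ifs with hk
      · exact h k hk
      · trivial
    · intro h i hi
      have := h i
      rwa [if_pos hi] at this
  rw [hset, Measure.pi_pi]
  have hQ : ∀ k, Q (if k ∈ T then A k else Set.univ) = if k ∈ T then Q (A k) else 1 := by
    intro k; split_ifs <;> simp
  simp_rw [hQ]
  rw [Finset.prod_ite_mem, Finset.univ_inter]

lemma map_eval (Q : Measure S) [IsProbabilityMeasure Q] {n : ℕ} (i : Fin n) :
    MeasurePreserving (fun ω : Fin n → S => ω i) (Measure.pi fun _ => Q) Q := by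
  refine ⟨measurable_pi_apply i, ?_⟩
  ext s hs
  rw [Measure.map_apply (measurable_pi_apply i) hs]
  have := pi_inter_eval Q {i} (fun _ => s)
  simpa using this

lemma map_pair (Q : Measure S) [IsProbabilityMeasure Q] {n : ℕ} {i j : Fin n} (hij : i ≠ j) :
    MeasurePreserving (fun ω : Fin n → S => (ω i, ω j)) (Measure.pi fun _ => Q) (Q.prod Q) := by
  classical
  have hm : Measurable fun ω : Fin n → S => (ω i, ω j) :=
    (measurable_pi_apply i).prodMk (measurable_pi_apply j)
  refine ⟨hm, ?_⟩
  refine (Measure.prod_eq fun s t hs ht => ?_).symm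
  rw [Measure.map_apply hm (hs.prod ht)]
  have hset : (fun ω : Fin n → S => (ω i, ω j)) ⁻¹' (s ×ˢ t)
      = ⋂ k ∈ ({i, j} : Finset (Fin n)),
          (fun ω : Fin n → S => ω k) ⁻¹' (if k = i then s else t) := by
    ext ω
    simp only [Set.mem_preimage, Set.mem_prod, Set.mem_iInter, Finset.mem_insert,
      Finset.mem_singleton]
    constructor
    · rintro ⟨h1, h2⟩ k hk
      rcases hk with rfl | rfl
      · rwa [if_pos rfl]
      · rwa [if_neg (Ne.symm hij)]
    · intro h
      refine ⟨?_, ?_⟩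
      · have := h i (Or.inl rfl); rwa [if_pos rfl] at this
      · have := h j (Or.inr rfl); rwa [if_neg (Ne.symm hij)] at this
  rw [hset, pi_inter_eval Q _ _, Finset.prod_pair hij, if_pos rfl, if_neg (Ne.symm hij)]

lemma iIndep_eval (Q : Measure S) [IsProbabilityMeasure Q] (n : ℕ) :
    ProbabilityTheory.iIndepFun
      (fun i (ω : Fin n → S) => ω i) (Measure.pi fun _ => Q) := by
  rw [ProbabilityTheory.iIndepFun_iff_measure_inter_preimage_eq_mul]
  intro T sets hsets
  rw [pi_inter_eval Q T sets]
  refine Finset.prod_congr rfl fun i hi => ?_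
  have := pi_inter_eval Q {i} sets
  simpa using this.symm

lemma exists_le_integral {Ω : Type*} [MeasurableSpace Ω] (μ : Measure Ω) [IsProbabilityMeasure μ]
    {h : Ω → ℝ} (hi : Integrable h μ) (h0 : ∀ x, 0 ≤ h x) :
    ∃ x, h x ≤ ∫ x, h x ∂μ := by
  by_contra hc
  push_neg at hc
  set c := ∫ x, h x ∂μ with hcdef
  have h0' : ∀ x, 0 ≤ h x - c := fun x => by linarith [hc x]
  have hi' : Integrable (fun x => h x - c) μ := hi.sub (integrable_const c)
  have hint : ∫ x, (h x - c) ∂μ = 0 := by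
    rw [integral_sub hi (integrable_const c), integral_const]
    simp [hcdef]
  have hae := (integral_eq_zero_iff_of_nonneg h0' hi').mp hint
  haveI : (ae μ).NeBot := ae_neBot.2 (IsProbabilityMeasure.ne_zero μ)
  obtain ⟨x, hx⟩ := hae.exists
  have : h x - c = 0 := hx
  linarith [hc x]


set_option maxHeartbeats 1000000 in
lemma amgm_abs (a b : ℝ) : |a| * |b| ≤ (a ^ 2 + b ^ 2) / 2 := by
  nlinarith [sq_nonneg (|a| - |b|), sq_abs a, sq_abs b, abs_nonneg a, abs_nonneg b]

lemma amgm (a b : ℝ) : a * b ≤ (a ^ 2 + b ^ 2) / 2 := by nlinarith [sq_nonneg (a - b)]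

lemma key (Q : Measure S) [IsProbabilityMeasure Q] (f : S × S → ℝ) (hf : Measurable f)
    (hf2 : MemLp f 2 (Q.prod Q)) (hdiag : MemLp (fun x => f (x, x)) 2 Q) (n : ℕ) :
    ∃ ω : Fin n → S,
      (∑ p : Fin n × Fin n, f (ω p.1, ω p.2)
        - ((n ^ 2 - n : ℝ) * (∫ p, f p ∂(Q.prod Q)) + n * ∫ x, f (x, x) ∂Q)) ^ 2
      ≤ 4 * n ^ 3 * max (∫ p, (f p) ^ 2 ∂(Q.prod Q)) (∫ x, (f (x, x)) ^ 2 ∂Q) := by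
  classical
  set ν : Measure (Fin n → S) := Measure.pi (fun _ => Q) with hνdef
  set I : ℝ := ∫ p, f p ∂(Q.prod Q) with hI
  set D : ℝ := ∫ x, f (x, x) ∂Q with hD
  set B : ℝ := max (∫ p, (f p) ^ 2 ∂(Q.prod Q)) (∫ x, (f (x, x)) ^ 2 ∂Q) with hB
  have hB0 : 0 ≤ B := le_trans (integral_nonneg fun p => sq_nonneg _) (le_max_left _ _)
  set u : Fin n × Fin n → (Fin n → S) → ℝ := fun p ω => f (ω p.1, ω p.2) with hu
  have humeas : ∀ p, Measurable (u p) := fun p =>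
    hf.comp ((measurable_pi_apply p.1).prodMk (measurable_pi_apply p.2))
  have hu2 : ∀ p, MemLp (u p) 2 ν := by
    intro p
    by_cases hp : p.1 = p.2
    · have : u p = (fun x => f (x, x)) ∘ (fun ω : Fin n → S => ω p.1) := by
        funext ω
        simp only [hu, Function.comp_apply, ← hp]
      rw [this]
      exact hdiag.comp_measurePreserving (map_eval Q p.1)
    · exact hf2.comp_measurePreserving (map_pair Q hp)
  have huint : ∀ p, Integrable (u p) ν := fun p => (hu2 p).integrable one_le_two
  set c : Fin n × Fin n → ℝ := fun p => ∫ ω, u p ω ∂ν with hc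
  have hcoff : ∀ p : Fin n × Fin n, p.1 ≠ p.2 → c p = I := by
    intro p hp
    have hmp := map_pair (S := S) Q (n := n) hp
    have hAE : AEStronglyMeasurable f (Measure.map (fun ω : Fin n → S => (ω p.1, ω p.2)) ν) := by
      rw [hmp.map_eq]; exact hf.aestronglyMeasurable
    have h2 := integral_map (μ := ν) hmp.measurable.aemeasurable hAE
    rw [hmp.map_eq] at h2
    exact h2.symm
  have hcdiag : ∀ p : Fin n × Fin n, p.1 = p.2 → c p = D := by
    intro p hp
    have hmp := map_eval (S := S) Q p.1
    have hAE : AEStronglyMeasurable (fun y => f (y, y))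
        (Measure.map (fun ω : Fin n → S => ω p.1) ν) := by
      rw [hmp.map_eq]; exact (hf.comp (measurable_id.prodMk measurable_id)).aestronglyMeasurable
    have h2 := integral_map (μ := ν) hmp.measurable.aemeasurable hAE
    rw [hmp.map_eq] at h2
    calc c p = ∫ ω, f (ω p.1, ω p.1) ∂ν := by simp only [hc, hu, ← hp]
    _ = D := by rw [hD]; exact h2.symm
  have husq : ∀ p, ∫ ω, (u p ω) ^ 2 ∂ν ≤ B := by
    intro p
    by_cases hp : p.1 = p.2
    · have hmp := map_eval (S := S) Q p.1
      have hAE : AEStronglyMeasurable (fun y => (f (y, y)) ^ 2)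
          (Measure.map (fun ω : Fin n → S => ω p.1) ν) := by
        rw [hmp.map_eq]
        exact ((hf.comp (measurable_id.prodMk measurable_id)).pow_const 2).aestronglyMeasurable
      have h2 := integral_map (μ := ν) hmp.measurable.aemeasurable hAE
      rw [hmp.map_eq] at h2
      have h3 : ∫ ω, (u p ω) ^ 2 ∂ν = ∫ y, (f (y, y)) ^ 2 ∂Q := by
        rw [h2]; simp only [hu, ← hp]
      rw [h3]
      exact le_max_right _ _
    · have hmp := map_pair (S := S) Q (n := n) hp
      have hAE : AEStronglyMeasurable (fun y => (f y) ^ 2)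
          (Measure.map (fun ω : Fin n → S => (ω p.1, ω p.2)) ν) := by
        rw [hmp.map_eq]
        exact (hf.pow_const 2).aestronglyMeasurable
      have h2 := integral_map (μ := ν) hmp.measurable.aemeasurable hAE
      rw [hmp.map_eq] at h2
      have h3 : ∫ ω, (u p ω) ^ 2 ∂ν = ∫ y, (f y) ^ 2 ∂(Q.prod Q) := h2.symm
      rw [h3]
      exact le_max_left _ _
  set v : Fin n × Fin n → (Fin n → S) → ℝ := fun p ω => u p ω - c p with hv
  have hv2 : ∀ p, MemLp (v p) 2 ν := fun p => (hu2 p).sub (memLp_const (c p))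
  have hvint : ∀ p, Integrable (v p) ν := fun p => (huint p).sub (integrable_const _)
  have hvmean : ∀ p, ∫ ω, v p ω ∂ν = 0 := by
    intro p
    rw [hv]
    rw [integral_sub (huint p) (integrable_const _), integral_const]
    simp [hc]
  have hvsq_int : ∀ p, Integrable (fun ω => (v p ω) ^ 2) ν := fun p => (hv2 p).integrable_sq
  have hvsq : ∀ p, ∫ ω, (v p ω) ^ 2 ∂ν ≤ B := by
    intro p
    have expand : ∀ ω, (v p ω) ^ 2 = (u p ω) ^ 2 - 2 * c p * u p ω + c p ^ 2 := by
      intro ω; simp only [hv]; ring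
    have h1 : Integrable (fun ω => (u p ω) ^ 2 - 2 * c p * u p ω) ν :=
      ((hu2 p).integrable_sq).sub ((huint p).const_mul _)
    calc ∫ ω, (v p ω) ^ 2 ∂ν
        = ∫ ω, ((u p ω) ^ 2 - 2 * c p * u p ω + c p ^ 2) ∂ν := by simp_rw [expand]
      _ = (∫ ω, (u p ω) ^ 2 ∂ν) - 2 * c p * c p + c p ^ 2 := by
          rw [integral_add h1 (integrable_const _), integral_sub ((hu2 p).integrable_sq)
            ((huint p).const_mul _), integral_const_mul, integral_const]
          simp [hc]
      _ ≤ B := by nlinarith [husq p, sq_nonneg (c p)]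
  have hprod_int : ∀ p q, Integrable (fun ω => v p ω * v q ω) ν := by
    intro p q
    refine Integrable.mono' (((hvsq_int p).add (hvsq_int q)).div_const 2)
      ((hv2 p).aestronglyMeasurable.mul (hv2 q).aestronglyMeasurable) ?_
    refine Filter.Eventually.of_forall fun ω => ?_
    rw [Real.norm_eq_abs, abs_mul]
    simp only [Pi.add_apply]
    exact amgm_abs _ _
  have hterm_bound : ∀ p q, ∫ ω, v p ω * v q ω ∂ν ≤ B := by
    intro p q
    calc ∫ ω, v p ω * v q ω ∂ν
        ≤ ∫ ω, ((v p ω) ^ 2 + (v q ω) ^ 2) / 2 ∂ν := by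
          refine integral_mono (hprod_int p q) (((hvsq_int p).add (hvsq_int q)).div_const 2) ?_
          intro ω
          simp only [Pi.add_apply]
          exact amgm _ _
      _ = ((∫ ω, (v p ω) ^ 2 ∂ν) + ∫ ω, (v q ω) ^ 2 ∂ν) / 2 := by
          rw [integral_div, integral_add (hvsq_int p) (hvsq_int q)]
      _ ≤ B := by linarith [hvsq p, hvsq q]
  have hindep : ∀ p q : Fin n × Fin n, p.1 ≠ q.1 → p.1 ≠ q.2 → p.2 ≠ q.1 → p.2 ≠ q.2 →
      ∫ ω, v p ω * v q ω ∂ν = 0 := by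
    intro p q h1 h2 h3 h4
    have base := (iIndep_eval Q n).indepFun_prodMk_prodMk
      (fun i => measurable_pi_apply i) p.1 p.2 q.1 q.2 h1 h2 h3 h4
    have step : ProbabilityTheory.IndepFun (u p) (u q) ν := base.comp hf hf
    have hind : ProbabilityTheory.IndepFun (v p) (v q) ν :=
      step.comp (measurable_id.sub measurable_const) (measurable_id.sub measurable_const)
    have hthis := hind.integral_fun_mul_eq_mul_integral (hvint p).aestronglyMeasurable
      (hvint q).aestronglyMeasurable
    calc ∫ ω, v p ω * v q ω ∂ν = (∫ ω, v p ω ∂ν) * ∫ ω, v q ω ∂ν := hthis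
    _ = 0 := by rw [hvmean p, hvmean q, mul_zero]
  -- the full sum
  have hsum2 : MemLp (fun ω => ∑ p : Fin n × Fin n, v p ω) 2 ν :=
    memLp_finset_sum Finset.univ (fun p _ => hv2 p)
  set W : ℝ := ∫ ω, (∑ p : Fin n × Fin n, v p ω) ^ 2 ∂ν with hW
  have hWexp : W = ∑ p : Fin n × Fin n, ∑ q : Fin n × Fin n, ∫ ω, v p ω * v q ω ∂ν := by
    rw [hW]
    have hsq : ∀ ω, (∑ p : Fin n × Fin n, v p ω) ^ 2
        = ∑ p : Fin n × Fin n, ∑ q : Fin n × Fin n, v p ω * v q ω := by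
      intro ω
      rw [sq, Finset.sum_mul_sum]
    simp_rw [hsq]
    rw [integral_finset_sum _ (fun p _ => integrable_finset_sum _ (fun q _ => hprod_int p q))]
    exact Finset.sum_congr rfl fun p _ => integral_finset_sum _ fun q _ => hprod_int p q
  have hsum_q : ∀ p : Fin n × Fin n,
      ∑ q : Fin n × Fin n, ∫ ω, v p ω * v q ω ∂ν ≤ 4 * n * B := by
    intro p
    set bad : Finset (Fin n × Fin n) :=
      Finset.univ.filter (fun q : Fin n × Fin n =>
        q.1 = p.1 ∨ q.1 = p.2 ∨ q.2 = p.1 ∨ q.2 = p.2) with hbad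
    have hzero : ∀ q ∈ Finset.univ, q ∉ bad → ∫ ω, v p ω * v q ω ∂ν = 0 := by
      intro q _ hq
      simp only [hbad, Finset.mem_filter, Finset.mem_univ, true_and] at hq
      push_neg at hq
      exact hindep p q (Ne.symm hq.1) (Ne.symm hq.2.2.1) (Ne.symm hq.2.1) (Ne.symm hq.2.2.2)
    have hfilter1 : ∀ a : Fin n,
        (Finset.univ.filter (fun q : Fin n × Fin n => q.1 = a)).card ≤ n := by
      intro a
      have : ∀ q ∈ (Finset.univ.filter (fun q : Fin n × Fin n => q.1 = a)),
          (fun q : Fin n × Fin n => q.2) q ∈ (Finset.univ : Finset (Fin n)) :=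
        fun q _ => Finset.mem_univ _
      refine le_trans (Finset.card_le_card_of_injOn _ this ?_) (by simp)
      intro a1 ha1 a2 ha2 hab
      simp only [Finset.coe_filter, Set.mem_setOf_eq, Finset.mem_univ, true_and] at ha1 ha2
      exact Prod.ext (ha1.trans ha2.symm) hab
    have hfilter2 : ∀ a : Fin n,
        (Finset.univ.filter (fun q : Fin n × Fin n => q.2 = a)).card ≤ n := by
      intro a
      have : ∀ q ∈ (Finset.univ.filter (fun q : Fin n × Fin n => q.2 = a)),
          (fun q : Fin n × Fin n => q.1) q ∈ (Finset.univ : Finset (Fin n)) :=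
        fun q _ => Finset.mem_univ _
      refine le_trans (Finset.card_le_card_of_injOn _ this ?_) (by simp)
      intro a1 ha1 a2 ha2 hab
      simp only [Finset.coe_filter, Set.mem_setOf_eq, Finset.mem_univ, true_and] at ha1 ha2
      exact Prod.ext hab (ha1.trans ha2.symm)
    have hcard : (bad.card : ℝ) ≤ 4 * n := by
      have : bad.card ≤ n + (n + (n + n)) := by
        rw [hbad, Finset.filter_or, Finset.filter_or, Finset.filter_or]
        refine le_trans (Finset.card_union_le _ _) ?_
        refine add_le_add (hfilter1 p.1) ?_
        refine le_trans (Finset.card_union_le _ _) ?_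
        refine add_le_add (hfilter1 p.2) ?_
        refine le_trans (Finset.card_union_le _ _) ?_
        exact add_le_add (hfilter2 p.1) (hfilter2 p.2)
      calc (bad.card : ℝ) ≤ ((n + (n + (n + n)) : ℕ) : ℝ) := by exact_mod_cast this
        _ = 4 * n := by push_cast; ring
    calc ∑ q : Fin n × Fin n, ∫ ω, v p ω * v q ω ∂ν
        = ∑ q ∈ bad, ∫ ω, v p ω * v q ω ∂ν := (Finset.sum_subset bad.subset_univ hzero).symm
      _ ≤ ∑ _q ∈ bad, B := Finset.sum_le_sum fun q _ => hterm_bound p q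
      _ = bad.card * B := by rw [Finset.sum_const, nsmul_eq_mul]
      _ ≤ 4 * n * B := mul_le_mul_of_nonneg_right hcard hB0
  have hWle : W ≤ 4 * (n : ℝ) ^ 3 * B := by
    rw [hWexp]
    calc ∑ p : Fin n × Fin n, ∑ q : Fin n × Fin n, ∫ ω, v p ω * v q ω ∂ν
        ≤ ∑ _p : Fin n × Fin n, 4 * (n : ℝ) * B := Finset.sum_le_sum fun p _ => hsum_q p
      _ = (Fintype.card (Fin n × Fin n)) * (4 * n * B) := by
          rw [Finset.sum_const, nsmul_eq_mul, Finset.card_univ]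
      _ = 4 * (n : ℝ) ^ 3 * B := by
          simp only [Fintype.card_prod, Fintype.card_fin]
          push_cast
          ring
  obtain ⟨ω, hω⟩ := exists_le_integral ν hsum2.integrable_sq (fun ω => sq_nonneg _)
  refine ⟨ω, ?_⟩
  have hM : ∑ p : Fin n × Fin n, c p = (n ^ 2 - n : ℝ) * I + n * D := by
    have hval : ∀ p : Fin n × Fin n, c p = if p.1 = p.2 then D else I := by
      intro p
      split_ifs with h
      exacts [hcdiag p h, hcoff p h]
    rw [Finset.sum_congr rfl fun p _ => hval p, Finset.sum_ite, Finset.sum_const,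
      Finset.sum_const, nsmul_eq_mul, nsmul_eq_mul]
    have hdiagcard : (Finset.univ.filter fun p : Fin n × Fin n => p.1 = p.2).card = n := by
      rw [show (Finset.univ.filter fun p : Fin n × Fin n => p.1 = p.2)
            = Finset.univ.image (fun i : Fin n => (i, i)) from ?_]
      · rw [Finset.card_image_of_injective _ (fun a b h => (Prod.ext_iff.mp h).1),
          Finset.card_univ, Fintype.card_fin]
      · ext ⟨a, b⟩
        simp only [Finset.mem_filter, Finset.mem_univ, true_and, Finset.mem_image,
          Prod.mk.injEq]
        constructor
        · rintro rfl
          exact ⟨a, rfl, rfl⟩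
        · rintro ⟨i, rfl, rfl⟩
          rfl
    have hcards := Finset.card_filter_add_card_filter_not
      (s := (Finset.univ : Finset (Fin n × Fin n))) (p := fun p : Fin n × Fin n => p.1 = p.2)
    rw [Finset.card_univ, Fintype.card_prod, Fintype.card_fin] at hcards
    have hoffcard : ((Finset.univ.filter fun p : Fin n × Fin n => ¬p.1 = p.2).card : ℝ)
        = (n : ℝ) ^ 2 - n := by
      have : (Finset.univ.filter fun p : Fin n × Fin n => ¬p.1 = p.2).card = n * n - n := by
        omega
      rw [this]
      have hle : n ≤ n * n := by
        cases n with
        | zero => simp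
        | succ m => exact Nat.le_mul_of_pos_left _ (Nat.succ_pos m)
      rw [Nat.cast_sub hle]
      push_cast
      ring
    rw [hdiagcard, hoffcard]
    ring
  have hdiff : (∑ p : Fin n × Fin n, f (ω p.1, ω p.2) - ((n ^ 2 - n : ℝ) * I + n * D))
      = ∑ p : Fin n × Fin n, v p ω := by
    rw [← hM, hv]
    rw [Finset.sum_sub_distrib]
  rw [hdiff]
  exact le_trans hω (le_trans (le_of_eq rfl) hWle)

end EmpiricalAux

namespace EmpiricalAux

variable {S : Type*} [MeasurableSpace S]

lemma integrable_dirac' {g : S → ℝ} (hg : Measurable g) (y : S) :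
    Integrable g (Measure.dirac y) := by
  refine ⟨hg.aestronglyMeasurable, ?_⟩
  rw [HasFiniteIntegral, lintegral_dirac' _ hg.enorm]
  exact enorm_lt_top

end EmpiricalAux

section Main

open EmpiricalAux

/-- Any probability measure `Q` can be approximated, for the purpose of
the double integral of a fixed square-integrable (with square-integrable diagonal)
measurable `f : S × S → ℝ`, by uniform measures `μₙ = (1/n) ∑ᵢ δ_{xᵢ⁽ⁿ⁾}` on `n` points:
`∫∫ f dμₙ dμₙ → ∫∫ f dQ dQ`. -/
theorem empirical_approximation_double_integral
    {S : Type*} [MeasurableSpace S] (Q : Measure S) [IsProbabilityMeasure Q]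
    (f : S × S → ℝ) (hf : Measurable f)
    (hf2 : MemLp f 2 (Q.prod Q))
    (hdiag : MemLp (fun x => f (x, x)) 2 Q) :
    ∃ (μ : ℕ → Measure S) (x : (n : ℕ) → Fin n → S),
      (∀ n : ℕ, μ n = (n : ℝ≥0∞)⁻¹ • ∑ i : Fin n, Measure.dirac (x n i)) ∧
      Tendsto (fun n : ℕ => ∫ a, ∫ b, f (a, b) ∂(μ n) ∂(μ n)) atTop
        (nhds (∫ a, ∫ b, f (a, b) ∂Q ∂Q)) := by
  classical
  have hInt : Integrable f (Q.prod Q) := hf2.integrable one_le_two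
  set I : ℝ := ∫ p, f p ∂(Q.prod Q) with hI
  set D : ℝ := ∫ x, f (x, x) ∂Q with hD
  set B : ℝ := max (∫ p, (f p) ^ 2 ∂(Q.prod Q)) (∫ x, (f (x, x)) ^ 2 ∂Q) with hB
  have hB0 : 0 ≤ B := le_trans (integral_nonneg fun p => sq_nonneg _) (le_max_left _ _)
  have hkey := fun n => EmpiricalAux.key Q f hf hf2 hdiag n
  set x : (n : ℕ) → Fin n → S := fun n => (hkey n).choose with hx
  have hxspec : ∀ n : ℕ, (∑ p : Fin n × Fin n, f (x n p.1, x n p.2)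
      - ((n ^ 2 - n : ℝ) * I + n * D)) ^ 2 ≤ 4 * n ^ 3 * B := fun n => (hkey n).choose_spec
  set μ : ℕ → Measure S := fun n => (n : ℝ≥0∞)⁻¹ • ∑ i : Fin n, Measure.dirac (x n i) with hμ
  refine ⟨μ, x, fun n => rfl, ?_⟩
  -- value of the iterated integral
  have hmeas_inner : ∀ a : S, Measurable fun b => f (a, b) :=
    fun a => hf.comp (measurable_const.prodMk measurable_id)
  have hmeas_left : ∀ b : Fin 1 → S, True := fun _ => trivial
  have hval : ∀ n : ℕ, (∫ a, ∫ b, f (a, b) ∂(μ n) ∂(μ n))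
      = ((n : ℝ)⁻¹) ^ 2 * ∑ p : Fin n × Fin n, f (x n p.1, x n p.2) := by
    intro n
    have inner : ∀ a : S, ∫ b, f (a, b) ∂(μ n) = (n : ℝ)⁻¹ * ∑ j : Fin n, f (a, x n j) := by
      intro a
      rw [hμ]
      rw [integral_smul_measure,
        integral_finset_sum_measure (fun j _ => integrable_dirac' (hmeas_inner a) _)]
      simp_rw [integral_dirac' _ _ (hmeas_inner a).stronglyMeasurable]
      rw [ENNReal.toReal_inv, ENNReal.toReal_natCast, smul_eq_mul]
    simp_rw [inner]
    have hmeas_outer : Measurable fun a : S => (n : ℝ)⁻¹ * ∑ j : Fin n, f (a, x n j) :=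
      (Finset.measurable_sum Finset.univ fun j _ =>
        hf.comp (measurable_id.prodMk measurable_const)).const_mul _
    rw [hμ, integral_smul_measure,
      integral_finset_sum_measure (fun i _ => integrable_dirac' hmeas_outer _)]
    simp_rw [integral_dirac' _ _ hmeas_outer.stronglyMeasurable]
    rw [ENNReal.toReal_inv, ENNReal.toReal_natCast, smul_eq_mul]
    rw [Fintype.sum_prod_type, Finset.mul_sum, Finset.mul_sum]
    refine Finset.sum_congr rfl fun i _ => ?_
    ring
  have htarget : (∫ a, ∫ b, f (a, b) ∂Q ∂Q) = I := by
    rw [hI, integral_prod f hInt]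
  rw [htarget]
  -- the approximating sequence and its limit
  set a : ℕ → ℝ := fun n => ∫ a, ∫ b, f (a, b) ∂(μ n) ∂(μ n) with ha
  set m : ℕ → ℝ := fun n => ((n : ℝ)⁻¹) ^ 2 * ((n ^ 2 - n : ℝ) * I + n * D) with hm
  have hinv : Tendsto (fun n : ℕ => (n : ℝ)⁻¹) atTop (nhds 0) :=
    tendsto_inv_atTop_nhds_zero_nat
  have hmlim : Tendsto m atTop (nhds I) := by
    have hmeq : ∀ᶠ n : ℕ in atTop, m n = (1 - (n : ℝ)⁻¹) * I + (n : ℝ)⁻¹ * D := by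
      filter_upwards [eventually_ge_atTop 1] with n hn
      have hn0 : (n : ℝ) ≠ 0 := Nat.cast_ne_zero.mpr (by omega)
      simp only [hm]
      field_simp
    have : Tendsto (fun n : ℕ => (1 - (n : ℝ)⁻¹) * I + (n : ℝ)⁻¹ * D) atTop (nhds I) := by
      have h1 : Tendsto (fun n : ℕ => (1 - (n : ℝ)⁻¹) * I) atTop (nhds ((1 - 0) * I)) :=
        (tendsto_const_nhds.sub hinv).mul tendsto_const_nhds
      have h2 : Tendsto (fun n : ℕ => (n : ℝ)⁻¹ * D) atTop (nhds (0 * D)) :=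
        hinv.mul tendsto_const_nhds
      have := h1.add h2
      simpa using this
    exact Tendsto.congr' (hmeq.mono fun n h => h.symm) this
  have hdifflim : Tendsto (fun n => a n - m n) atTop (nhds 0) := by
    have hbound : ∀ᶠ n : ℕ in atTop, |a n - m n| ≤ Real.sqrt (4 * B) * Real.sqrt (n : ℝ)⁻¹ := by
      filter_upwards [eventually_ge_atTop 1] with n hn
      have hn0 : (0 : ℝ) < n := by exact_mod_cast (by omega : 0 < n)
      have hdq : (a n - m n) ^ 2 ≤ 4 * B / n := by
        have : a n - m n = ((n : ℝ)⁻¹) ^ 2 *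
            (∑ p : Fin n × Fin n, f (x n p.1, x n p.2) - ((n ^ 2 - n : ℝ) * I + n * D)) := by
          simp only [ha]
          rw [hval n]
          simp only [hm]
          ring
        rw [this, mul_pow]
        calc (((n : ℝ)⁻¹) ^ 2) ^ 2 *
            (∑ p : Fin n × Fin n, f (x n p.1, x n p.2) - ((n ^ 2 - n : ℝ) * I + n * D)) ^ 2
            ≤ (((n : ℝ)⁻¹) ^ 2) ^ 2 * (4 * n ^ 3 * B) := by
              refine mul_le_mul_of_nonneg_left (hxspec n) (by positivity)
          _ = 4 * B / n := by
              field_simp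
      have h1 : |a n - m n| = Real.sqrt ((a n - m n) ^ 2) := (Real.sqrt_sq_eq_abs _).symm
      rw [h1]
      have h2 : Real.sqrt ((a n - m n) ^ 2) ≤ Real.sqrt (4 * B / n) := Real.sqrt_le_sqrt hdq
      refine le_trans h2 ?_
      rw [div_eq_mul_inv, Real.sqrt_mul (by positivity)]
    have hrhs : Tendsto (fun n : ℕ => Real.sqrt (4 * B) * Real.sqrt (n : ℝ)⁻¹) atTop (nhds 0) := by
      have : Tendsto (fun n : ℕ => Real.sqrt (n : ℝ)⁻¹) atTop (nhds (Real.sqrt 0)) :=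
        (Real.continuous_sqrt.continuousAt.tendsto).comp hinv
      rw [Real.sqrt_zero] at this
      simpa using tendsto_const_nhds.mul this
    have habs : Tendsto (fun n => |a n - m n|) atTop (nhds 0) := by
      refine squeeze_zero' (Filter.Eventually.of_forall fun n => abs_nonneg _) hbound hrhs
    exact (tendsto_zero_iff_abs_tendsto_zero _).mpr habs
  have : Tendsto (fun n => (a n - m n) + m n) atTop (nhds (0 + I)) := hdifflim.add hmlim
  simpa using this

end Main
end

section
/- Let (S, 𝒜) be a measurable space and f : S × S → ℝ a measurable symmetric function (f(x,y) = f(y,x) for all x, y) such that for every finitely supported probability measure μ on S one has ∫∫ f(x,y) dμ(x) dμ(y) ≥ 0. Then for every probability measure Q on S such that f is square-integrable with respect to Q ⊗ Q and x ↦ f(x,x) is square-integrable with respect to Q, one has ∫∫ f(x,y) dQ(x) dQ(y) ≥ 0. -/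
open MeasureTheory

lemma measurePreserving_eval' {S : Type*} [MeasurableSpace S] (μ : Measure S)
    [IsProbabilityMeasure μ] {n : ℕ} (i : Fin n) :
    MeasurePreserving (fun x : Fin n → S => x i) (Measure.pi fun _ => μ) μ := by
  refine ⟨measurable_pi_apply i, ?_⟩
  ext s hs
  rw [Measure.map_apply (measurable_pi_apply i) hs]
  have h1 : (fun x : Fin n → S => x i) ⁻¹' s
      = Set.pi Set.univ (Function.update (fun _ => Set.univ) i s) := by
    rw [← Set.eval_preimage]
  rw [h1, Measure.pi_pi]
  simp only [Function.apply_update (fun _ s => μ s)]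
  rw [Finset.prod_update_of_mem (Finset.mem_univ i)]
  simp

lemma measurePreserving_eval_pair {S : Type*} [MeasurableSpace S] (μ : Measure S)
    [IsProbabilityMeasure μ] {n : ℕ} {i j : Fin n} (hij : i ≠ j) :
    MeasurePreserving (fun x : Fin n → S => (x i, x j)) (Measure.pi fun _ => μ) (μ.prod μ) := by
  have hm : Measurable (fun x : Fin n → S => (x i, x j)) :=
    (measurable_pi_apply i).prodMk (measurable_pi_apply j)
  refine ⟨hm, ?_⟩
  refine (Measure.prod_eq fun s t hs ht => ?_).symm
  rw [Measure.map_apply hm (hs.prod ht)]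
  have h1 : (fun x : Fin n → S => (x i, x j)) ⁻¹' (s ×ˢ t) =
      Set.pi Set.univ (Function.update (Function.update (fun _ => Set.univ) i s) j t) := by
    ext x
    simp only [Set.mem_preimage, Set.mem_prod, Set.mem_pi, Set.mem_univ, true_implies,
      Function.update_apply]
    constructor
    · rintro ⟨h1, h2⟩ k
      split_ifs with h h'
      · exact h ▸ h2
      · exact h' ▸ h1
      · trivial
    · intro h
      have hi := h i
      have hj := h j
      simp [hij, Ne.symm hij] at hi hj
      exact ⟨hi, hj⟩
  rw [h1, Measure.pi_pi]
  simp only [Function.apply_update (fun _ s => μ s)]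
  rw [Finset.prod_update_of_mem (Finset.mem_univ j)]
  rw [Finset.prod_update_of_mem (Finset.mem_sdiff.2 ⟨Finset.mem_univ i, by simp [hij]⟩)]
  simp [mul_comm]

/-- If a measurable symmetric `f : S × S → ℝ` is nonnegative-definite
against every finitely supported probability measure (i.e. `∑ᵢⱼ wᵢ wⱼ f(xᵢ,xⱼ) ≥ 0` for
all nonnegative weights summing to 1), then `∫∫ f dQ dQ ≥ 0` for every probability
measure `Q` making `f` square-integrable on `Q ⊗ Q` with square-integrable diagonal. -/
theorem double_integral_nonneg_of_finitely_supported_nonneg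
    {S : Type*} [MeasurableSpace S] (f : S × S → ℝ) (hf : Measurable f)
    (hsymm : ∀ x y, f (x, y) = f (y, x))
    (hpos : ∀ (n : ℕ) (x : Fin n → S) (w : Fin n → ℝ), (∀ i, 0 ≤ w i) → (∑ i, w i = 1) →
      0 ≤ ∑ i, ∑ j, w i * w j * f (x i, x j)) :
    ∀ (Q : Measure S), IsProbabilityMeasure Q → MemLp f 2 (Q.prod Q) →
      MemLp (fun x => f (x, x)) 2 Q →
      0 ≤ ∫ x, ∫ y, f (x, y) ∂Q ∂Q := by
  intro Q hQ hL2 hL2d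
  have hint : Integrable f (Q.prod Q) := hL2.integrable one_le_two
  have hdiag : Integrable (fun x => f (x, x)) Q := hL2d.integrable one_le_two
  have hfd : Measurable (fun s : S => f (s, s)) := hf.comp (measurable_id.prodMk measurable_id)
  set I := ∫ p, f p ∂(Q.prod Q) with hI
  set D := ∫ x, f (x, x) ∂Q with hD
  have hII : ∫ x, ∫ y, f (x, y) ∂Q ∂Q = I := (integral_prod f hint).symm
  rw [hII]
  have key : ∀ m : ℕ, 0 ≤ (m : ℝ) * I + D := by
    intro m
    set n := m + 1 with hn
    have hn0 : (n : ℝ) ≠ 0 := by positivity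
    set π := Measure.pi (fun _ : Fin n => Q) with hπ
    -- integrability of each term
    have hIij : ∀ i j : Fin n, Integrable (fun x : Fin n → S => f (x i, x j)) π := by
      intro i j
      by_cases hij : i = j
      · subst hij
        exact ((measurePreserving_eval' Q i).integrable_comp hfd.aestronglyMeasurable).2 hdiag
      · exact ((measurePreserving_eval_pair Q hij).integrable_comp hf.aestronglyMeasurable).2 hint
    -- values of each integral
    have hval : ∀ i j : Fin n, ∫ x, f (x i, x j) ∂π = if i = j then D else I := by
      intro i j
      by_cases hij : i = j
      · subst hij
        rw [if_pos rfl]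
        have h2 : ∫ x : Fin n → S, f (x i, x i) ∂π = ∫ s, f (s, s) ∂Q := by
          rw [← (measurePreserving_eval' Q i).map_eq,
            integral_map (measurable_pi_apply i).aemeasurable hfd.aestronglyMeasurable]
        exact h2
      · rw [if_neg hij]
        have h2 : ∫ x : Fin n → S, f (x i, x j) ∂π = ∫ p, f p ∂(Q.prod Q) := by
          rw [← (measurePreserving_eval_pair Q hij).map_eq,
            integral_map ((measurable_pi_apply i).prodMk (measurable_pi_apply j)).aemeasurable
              hf.aestronglyMeasurable]
        exact h2
    -- pointwise nonnegativity from hpos with uniform weights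
    have hptw : ∀ x : Fin n → S,
        0 ≤ ∑ i : Fin n, ∑ j : Fin n, (1 / (n : ℝ)) * (1 / (n : ℝ)) * f (x i, x j) := by
      intro x
      refine hpos n x (fun _ => 1 / (n : ℝ)) (fun i => by positivity) ?_
      simp only [Finset.sum_const, Finset.card_univ, Fintype.card_fin, nsmul_eq_mul]
      field_simp
    have h0 : 0 ≤ ∫ x, ∑ i : Fin n, ∑ j : Fin n,
        (1 / (n : ℝ)) * (1 / (n : ℝ)) * f (x i, x j) ∂π := integral_nonneg hptw
    have hcalc : ∫ x, ∑ i : Fin n, ∑ j : Fin n,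
        (1 / (n : ℝ)) * (1 / (n : ℝ)) * f (x i, x j) ∂π
        = ∑ i : Fin n, ∑ j : Fin n, (1 / (n : ℝ)) * (1 / (n : ℝ)) * (if i = j then D else I) := by
      rw [integral_finset_sum _
        (fun i _ => integrable_finset_sum _ (fun j _ => (hIij i j).const_mul _))]
      refine Finset.sum_congr rfl fun i _ => ?_
      rw [integral_finset_sum _ (fun j _ => (hIij i j).const_mul _)]
      refine Finset.sum_congr rfl fun j _ => ?_
      rw [integral_const_mul, hval i j]
    rw [hcalc] at h0
    have hsum : ∑ i : Fin n, ∑ j : Fin n, (1 / (n : ℝ)) * (1 / (n : ℝ)) * (if i = j then D else I)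
        = (1 / (n : ℝ)) * (1 / (n : ℝ)) * ((n : ℝ) * ((n : ℝ) * I + (D - I))) := by
      simp_rw [← Finset.mul_sum]
      congr 1
      have hinner : ∀ i : Fin n, ∑ j : Fin n, (if i = j then D else I)
          = (n : ℝ) * I + (D - I) := by
        intro i
        have : ∀ j : Fin n, (if i = j then D else I) = I + (if j = i then D - I else 0) := by
          intro j
          by_cases h : i = j
          · simp [h]
          · simp [h, Ne.symm h]
        simp_rw [this]
        rw [Finset.sum_add_distrib, Finset.sum_ite_eq' Finset.univ i (fun _ => D - I)]
        simp [mul_comm]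
      simp_rw [hinner]
      simp only [Finset.sum_const, Finset.card_univ, Fintype.card_fin, nsmul_eq_mul]
    rw [hsum] at h0
    have hn1 : (0 : ℝ) < (1 / (n : ℝ)) * (1 / (n : ℝ)) * (n : ℝ) := by positivity
    have h2 : 0 ≤ (n : ℝ) * I + (D - I) := by
      by_contra hcon
      push_neg at hcon
      nlinarith
    have : (n : ℝ) = (m : ℝ) + 1 := by push_cast [hn]; ring
    rw [this] at h2
    linarith
  by_contra h
  push_neg at h
  obtain ⟨m, hm⟩ := exists_nat_gt (D / (-I))
  have hI' : (0 : ℝ) < -I := by linarith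
  have hDm : D < (m : ℝ) * (-I) := (div_lt_iff₀ hI').1 hm
  have := key m
  nlinarith
end

section
/- Let (S, 𝒜) be a measurable space and f : S × S → ℝ a measurable symmetric function such that for every finitely supported probability measure μ on S one has ∫∫ f dμ⊗μ ≥ 0. Let Q be a probability measure on S such that f is square-integrable with respect to Q ⊗ Q, x ↦ f(x,x) is square-integrable with respect to Q, and ∫∫ f(x,y) dQ(x) dQ(y) = 0. Then for every point x ∈ S such that y ↦ f(x,y) is square-integrable with respect to Q, one has ∫ f(x,y) dQ(y) ≥ 0. -/
open MeasureTheory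

private lemma aux_nat_bound (a b : ℝ) (h : ∀ n : ℕ, 0 ≤ (n : ℝ) * a + b) : 0 ≤ a := by
  by_contra hneg
  push_neg at hneg
  obtain ⟨n, hn⟩ := exists_nat_gt (b / (-a))
  have h1 := h n
  rw [div_lt_iff₀ (by linarith)] at hn
  linarith

private lemma pi_map_eval {S : Type*} [MeasurableSpace S] (μ : Measure S)
    [IsProbabilityMeasure μ] {n : ℕ} (i : Fin n) :
    MeasurePreserving (Function.eval i) (Measure.pi fun _ : Fin n => μ) μ := by
  refine ⟨measurable_pi_apply i, ?_⟩
  ext s hs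
  rw [Measure.map_apply (measurable_pi_apply i) hs]
  have hset : (Function.eval i ⁻¹' s) =
      Set.pi Set.univ (Function.update (fun _ : Fin n => (Set.univ : Set S)) i s) := by
    ext ω
    simp only [Set.mem_preimage, Set.mem_pi, Set.mem_univ, true_implies,
      Function.update_apply]
    constructor
    · intro h k
      split_ifs with hk
      · subst hk; exact h
      · trivial
    · intro h
      have := h i
      simpa using this
  rw [hset, Measure.pi_pi]
  simp only [Function.apply_update (fun _ u => μ u)]
  rw [Finset.prod_update_of_mem (Finset.mem_univ i)]
  simp

private lemma pi_map_pair {S : Type*} [MeasurableSpace S] (μ : Measure S)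
    [IsProbabilityMeasure μ] {n : ℕ} (i j : Fin n) (hij : i ≠ j) :
    MeasurePreserving (fun ω : Fin n → S => (ω i, ω j))
      (Measure.pi fun _ : Fin n => μ) (μ.prod μ) := by
  have hm : Measurable (fun ω : Fin n → S => (ω i, ω j)) :=
    (measurable_pi_apply i).prodMk (measurable_pi_apply j)
  refine ⟨hm, ?_⟩
  refine (Measure.prod_eq fun s t hs ht => ?_).symm
  rw [Measure.map_apply hm (hs.prod ht)]
  have hset : ((fun ω : Fin n → S => (ω i, ω j)) ⁻¹' (s ×ˢ t)) =
      Set.pi Set.univ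
        (Function.update (Function.update (fun _ : Fin n => (Set.univ : Set S)) i s) j t) := by
    ext ω
    simp only [Set.mem_preimage, Set.mem_prod, Set.mem_pi, Set.mem_univ, true_implies,
      Function.update_apply]
    constructor
    · rintro ⟨h1, h2⟩ k
      split_ifs with hk hk'
      · subst hk; exact h2
      · subst hk'; exact h1
      · trivial
    · intro h
      constructor
      · have := h i
        simp only [if_neg hij, if_pos rfl] at this
        exact this
      · have := h j
        simp only [if_pos rfl] at this
        exact this
  rw [hset, Measure.pi_pi]
  simp only [Function.apply_update (fun _ u => μ u)]
  rw [Finset.prod_update_of_mem (Finset.mem_univ j), Finset.sdiff_singleton_eq_erase,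
    Finset.prod_update_of_mem (Finset.mem_erase.mpr ⟨hij, Finset.mem_univ i⟩)]
  simp [mul_comm]

private lemma my_smul_prod {α β : Type*} [MeasurableSpace α] [MeasurableSpace β]
    (c : ENNReal) (μ : Measure α) (ν : Measure β) [SFinite μ] [SFinite ν] :
    (c • μ).prod ν = c • μ.prod ν := by
  ext s hs
  rw [Measure.prod_apply hs, Measure.smul_apply, Measure.prod_apply hs,
    lintegral_smul_measure, smul_eq_mul]

private lemma my_prod_smul {α β : Type*} [MeasurableSpace α] [MeasurableSpace β]
    (c : ENNReal) (μ : Measure α) (ν : Measure β) [SFinite μ] [SFinite ν] :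
    μ.prod (c • ν) = c • μ.prod ν := by
  ext s hs
  rw [Measure.prod_apply hs, Measure.smul_apply, Measure.prod_apply hs]
  simp only [Measure.smul_apply, smul_eq_mul]
  rw [lintegral_const_mul _ (measurable_measure_prodMk_left hs)]

private lemma my_integrable_dirac {α E : Type*} [MeasurableSpace α] [NormedAddCommGroup E]
    {g : α → E} (hg : StronglyMeasurable g) (p : α) : Integrable g (Measure.dirac p) := by
  refine ⟨hg.aestronglyMeasurable, ?_⟩
  rw [hasFiniteIntegral_def, lintegral_dirac' _ hg.enorm]
  exact enorm_lt_top

private lemma core_nonneg {S : Type*} [MeasurableSpace S] (f : S × S → ℝ) (hf : Measurable f)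
    (hpos : ∀ (n : ℕ) (x : Fin n → S) (w : Fin n → ℝ), (∀ i, 0 ≤ w i) → (∑ i, w i = 1) →
      0 ≤ ∑ i, ∑ j, w i * w j * f (x i, x j))
    (μ : Measure S) [IsProbabilityMeasure μ]
    (hint : Integrable f (μ.prod μ)) (hd : Integrable (fun x => f (x, x)) μ) :
    0 ≤ ∫ p, f p ∂(μ.prod μ) := by
  set D := ∫ p, f p ∂(μ.prod μ) with hD
  set T := ∫ x, f (x, x) ∂μ with hT
  have key : ∀ m : ℕ, 0 ≤ (m : ℝ) * D + T := by
    intro m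
    set n := m + 1 with hn
    set π := Measure.pi (fun _ : Fin n => μ) with hπ
    have hterm : ∀ i j : Fin n, Integrable (fun ω : Fin n → S => f (ω i, ω j)) π := by
      intro i j
      by_cases hij : i = j
      · subst hij
        exact ((pi_map_eval μ i).integrable_comp hd.aestronglyMeasurable).mpr hd
      · exact ((pi_map_pair μ i j hij).integrable_comp hint.aestronglyMeasurable).mpr hint
    have hval : ∀ i j : Fin n, (∫ ω, f (ω i, ω j) ∂π) = if i = j then T else D := by
      intro i j
      by_cases hij : i = j
      · subst hij
        rw [if_pos rfl, hT, ← (pi_map_eval μ i).map_eq,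
          integral_map (measurable_pi_apply i).aemeasurable
            (hf.comp (measurable_id.prodMk measurable_id)).aestronglyMeasurable]
      · rw [if_neg hij, hD, ← (pi_map_pair μ i j hij).map_eq,
          integral_map ((measurable_pi_apply i).prodMk (measurable_pi_apply j)).aemeasurable
            hf.aestronglyMeasurable]
    have hnonneg : 0 ≤ ∫ ω, (∑ i, ∑ j, f (ω i, ω j)) ∂π := by
      refine integral_nonneg fun ω => ?_
      simp only [Pi.zero_apply]
      have hp := hpos n ω (fun _ => (n : ℝ)⁻¹) (fun _ => by positivity)
        (by
          rw [Finset.sum_const, Finset.card_univ, Fintype.card_fin, nsmul_eq_mul]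
          exact mul_inv_cancel₀ (Nat.cast_ne_zero.mpr (Nat.succ_ne_zero m)))
      have e : ∑ i, ∑ j, (n : ℝ)⁻¹ * (n : ℝ)⁻¹ * f (ω i, ω j)
          = (n : ℝ)⁻¹ * (n : ℝ)⁻¹ * ∑ i, ∑ j, f (ω i, ω j) := by
        simp_rw [Finset.mul_sum]
      rw [e] at hp
      have cpos : (0 : ℝ) < (n : ℝ)⁻¹ * (n : ℝ)⁻¹ := by positivity
      exact le_of_mul_le_mul_left (by linarith) cpos
    have hsum : (∫ ω, (∑ i, ∑ j, f (ω i, ω j)) ∂π)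
        = (n : ℝ) * ((n : ℝ) * D + (T - D)) := by
      rw [integral_finset_sum _ fun i _ => integrable_finset_sum _ fun j _ => hterm i j]
      have : ∀ i : Fin n, (∫ ω, (∑ j, f (ω i, ω j)) ∂π) = (n : ℝ) * D + (T - D) := by
        intro i
        rw [integral_finset_sum _ fun j _ => hterm i j]
        simp_rw [hval i]
        have e2 : ∀ j : Fin n, (if i = j then T else D) = D + (if i = j then T - D else 0) := by
          intro j; split_ifs <;> ring
        simp_rw [e2]
        rw [Finset.sum_add_distrib, Finset.sum_const, Finset.sum_ite_eq, Finset.card_univ,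
          Fintype.card_fin, if_pos (Finset.mem_univ i), nsmul_eq_mul]
      simp_rw [this]
      rw [Finset.sum_const, Finset.card_univ, Fintype.card_fin, nsmul_eq_mul]
    rw [hsum] at hnonneg
    have hrw : (n : ℝ) * ((n : ℝ) * D + (T - D)) = ((m : ℝ) + 1) * ((m : ℝ) * D + T) := by
      have : (n : ℝ) = (m : ℝ) + 1 := by rw [hn]; push_cast; ring
      rw [this]; ring
    rw [hrw] at hnonneg
    have hmp : (0 : ℝ) < (m : ℝ) + 1 := by positivity
    nlinarith
  exact aux_nat_bound D T key

/-- Suppose the measurable symmetric `f : S × S → ℝ` is nonnegative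
against every finitely supported probability measure, `f` is square-integrable w.r.t.
`Q ⊗ Q` with square-integrable diagonal, and `∫∫ f dQ dQ = 0`. Then for every `x ∈ S`
with `y ↦ f(x,y)` square-integrable, `∫ f(x,y) dQ(y) ≥ 0`. -/
theorem section_integral_nonneg_of_double_integral_zero
    {S : Type*} [MeasurableSpace S] (f : S × S → ℝ) (hf : Measurable f)
    (hsymm : ∀ x y, f (x, y) = f (y, x))
    (hpos : ∀ (n : ℕ) (x : Fin n → S) (w : Fin n → ℝ), (∀ i, 0 ≤ w i) → (∑ i, w i = 1) →
      0 ≤ ∑ i, ∑ j, w i * w j * f (x i, x j))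
    (Q : Measure S) [IsProbabilityMeasure Q]
    (hf2 : MemLp f 2 (Q.prod Q)) (hdiag : MemLp (fun x => f (x, x)) 2 Q)
    (hzero : ∫ x, ∫ y, f (x, y) ∂Q ∂Q = 0) :
    ∀ x : S, MemLp (fun y => f (x, y)) 2 Q → 0 ≤ ∫ y, f (x, y) ∂Q := by
  intro x hx
  set I := ∫ y, f (x, y) ∂Q with hI
  set c := f (x, x) with hc
  have h1 : Integrable (fun y => f (x, y)) Q := hx.integrable one_le_two
  have h2 : Integrable (fun y => f (y, x)) Q := by
    have e : (fun y => f (y, x)) = fun y => f (x, y) := funext fun y => hsymm y x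
    rw [e]; exact h1
  have hQQ : Integrable f (Q.prod Q) := hf2.integrable one_le_two
  have hQd : Integrable f (Q.prod (Measure.dirac x)) := by
    rw [Measure.prod_dirac]
    exact (integrable_map_measure hf.aestronglyMeasurable
      (measurable_id.prodMk measurable_const).aemeasurable).mpr h2
  have hdQ : Integrable f ((Measure.dirac x).prod Q) := by
    rw [Measure.dirac_prod]
    exact (integrable_map_measure hf.aestronglyMeasurable
      measurable_prodMk_left.aemeasurable).mpr h1
  have hdd : Integrable f ((Measure.dirac x).prod (Measure.dirac x)) := by
    rw [Measure.dirac_prod_dirac]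
    exact my_integrable_dirac hf.stronglyMeasurable _
  have hdiagQ : Integrable (fun y => f (y, y)) Q := hdiag.integrable one_le_two
  have hdiagd : Integrable (fun y => f (y, y)) (Measure.dirac x) :=
    my_integrable_dirac (hf.comp (measurable_id.prodMk measurable_id)).stronglyMeasurable _
  have hDq : ∫ p, f p ∂(Q.prod Q) = 0 := by
    rw [MeasureTheory.integral_prod _ hQQ]
    exact hzero
  have hIQd : ∫ p, f p ∂(Q.prod (Measure.dirac x)) = I := by
    rw [Measure.prod_dirac, integral_map measurable_prodMk_right.aemeasurable
      hf.aestronglyMeasurable]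
    simp only [hI]
    exact integral_congr_ae (Filter.EventuallyEq.of_eq (funext fun y => hsymm y x))
  have hIdQ : ∫ p, f p ∂((Measure.dirac x).prod Q) = I := by
    rw [Measure.dirac_prod, integral_map measurable_prodMk_left.aemeasurable
      hf.aestronglyMeasurable]
  have hIdd : ∫ p, f p ∂((Measure.dirac x).prod (Measure.dirac x)) = c := by
    rw [Measure.dirac_prod_dirac]
    exact integral_dirac' f (x, x) hf.stronglyMeasurable
  have key : ∀ m : ℕ, 0 ≤ (m : ℝ) * (2 * I) + (2 * I + c) := by
    intro m
    set t : ℝ := 1 / ((m : ℝ) + 2) with ht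
    have ht0 : 0 < t := by positivity
    have ht1 : t < 1 := by
      rw [ht]
      rw [div_lt_one (by positivity)]
      linarith [(Nat.cast_nonneg m : (0 : ℝ) ≤ m)]
    set a : ENNReal := ENNReal.ofReal (1 - t) with ha
    set b : ENNReal := ENNReal.ofReal t with hb
    have haT : a ≠ ⊤ := ENNReal.ofReal_ne_top
    have hbT : b ≠ ⊤ := ENNReal.ofReal_ne_top
    set μ : Measure S := a • Q + b • Measure.dirac x with hμ
    haveI : IsProbabilityMeasure μ := by
      constructor
      rw [hμ]
      simp only [Measure.coe_add, Pi.add_apply, Measure.smul_apply, smul_eq_mul,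
        measure_univ, mul_one, Measure.dirac_apply_of_mem (Set.mem_univ x)]
      rw [ha, hb, ← ENNReal.ofReal_add (by linarith) (le_of_lt ht0)]
      norm_num
    have hexp : μ.prod μ = ((a * a) • Q.prod Q + (a * b) • Q.prod (Measure.dirac x))
        + ((b * a) • (Measure.dirac x).prod Q
          + (b * b) • (Measure.dirac x).prod (Measure.dirac x)) := by
      rw [hμ, Measure.add_prod, my_smul_prod, my_smul_prod, Measure.prod_add, Measure.prod_add,
        my_prod_smul, my_prod_smul, my_prod_smul, my_prod_smul, smul_add, smul_add,
        smul_smul, smul_smul, smul_smul, smul_smul]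
    have hM1 : Integrable f ((a * a) • Q.prod Q + (a * b) • Q.prod (Measure.dirac x)) :=
      Integrable.add_measure
        (hQQ.smul_measure (ENNReal.mul_ne_top haT haT))
        (hQd.smul_measure (ENNReal.mul_ne_top haT hbT))
    have hM2 : Integrable f ((b * a) • (Measure.dirac x).prod Q
        + (b * b) • (Measure.dirac x).prod (Measure.dirac x)) :=
      Integrable.add_measure
        (hdQ.smul_measure (ENNReal.mul_ne_top hbT haT))
        (hdd.smul_measure (ENNReal.mul_ne_top hbT hbT))
    have hintμ : Integrable f (μ.prod μ) := by
      rw [hexp]; exact hM1.add_measure hM2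
    have hdμ : Integrable (fun y => f (y, y)) μ := by
      rw [hμ]
      exact Integrable.add_measure (hdiagQ.smul_measure haT) (hdiagd.smul_measure hbT)
    have hcore := core_nonneg f hf hpos μ hintμ hdμ
    have haR : a.toReal = 1 - t := ENNReal.toReal_ofReal (by linarith)
    have hbR : b.toReal = t := ENNReal.toReal_ofReal (le_of_lt ht0)
    have hvalμ : ∫ p, f p ∂(μ.prod μ)
        = ((1 - t) * (1 - t) * 0 + (1 - t) * t * I) + (t * (1 - t) * I + t * t * c) := by
      rw [hexp, integral_add_measure hM1 hM2,
        integral_add_measure (hQQ.smul_measure (ENNReal.mul_ne_top haT haT))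
          (hQd.smul_measure (ENNReal.mul_ne_top haT hbT)),
        integral_add_measure (hdQ.smul_measure (ENNReal.mul_ne_top hbT haT))
          (hdd.smul_measure (ENNReal.mul_ne_top hbT hbT)),
        integral_smul_measure, integral_smul_measure, integral_smul_measure,
        integral_smul_measure, hDq, hIQd, hIdQ, hIdd,
        ENNReal.toReal_mul, ENNReal.toReal_mul, ENNReal.toReal_mul, ENNReal.toReal_mul,
        haR, hbR]
      simp [smul_eq_mul]
    rw [hvalμ] at hcore
    have h1t : 1 - t = ((m : ℝ) + 1) * t := by
      rw [ht]; field_simp; ring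
    have hform : ((1 - t) * (1 - t) * 0 + (1 - t) * t * I) + (t * (1 - t) * I + t * t * c)
        = (t * t) * ((m : ℝ) * (2 * I) + (2 * I + c)) := by
      rw [h1t]; ring
    rw [hform] at hcore
    have htt : 0 < t * t := mul_pos ht0 ht0
    have h0 : t * t * 0 ≤ t * t * ((m : ℝ) * (2 * I) + (2 * I + c)) := by linarith
    exact le_of_mul_le_mul_left h0 htt
  have h2I := aux_nat_bound (2 * I) (2 * I + c) key
  linarith
end

section
/- Let H be a real Hilbert space equipped with its Borel σ-algebra, and let P be a Borel probability measure on H with finite second moment, i.e. ∫ ‖x‖² dP(x) < ∞. Assume that the function (x,y) ↦ ⟨x,y⟩ is measurable with respect to the product σ-algebra on H × H and that ∫∫ ⟨x,y⟩ dP(x) dP(y) = 0. Then for every b ∈ H, ∫ ⟨x,b⟩ dP(x) = 0. -/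
open MeasureTheory

/-- Let `H` be a real Hilbert space with its Borel σ-algebra and `P` a
Borel probability measure with finite second moment such that `(x,y) ↦ ⟪x,y⟫` is
measurable for the product σ-algebra and `∫∫ ⟪x,y⟫ dP(x) dP(y) = 0` (the origin is an
exponential barycenter). Then `∫ ⟪x,b⟫ dP(x) = 0` for every `b ∈ H`. -/
theorem integral_inner_eq_zero_of_exponential_barycenter
    {H : Type*} [NormedAddCommGroup H] [InnerProductSpace ℝ H] [CompleteSpace H]
    [MeasurableSpace H] [BorelSpace H]
    (P : Measure H) [IsProbabilityMeasure P]
    (hmom : Integrable (fun x : H => ‖x‖ ^ 2) P)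
    (hmeas : Measurable fun p : H × H => (inner ℝ p.1 p.2 : ℝ))
    (hzero : ∫ y, ∫ x, (inner ℝ x y : ℝ) ∂P ∂P = 0) :
    ∀ b : H, ∫ x, (inner ℝ x b : ℝ) ∂P = 0 := by
  -- ‖x‖ is integrable
  have hint : Integrable (fun x : H => ‖x‖) P := by
    refine Integrable.mono' ((integrable_const 1).add hmom) ?_ ?_
    · exact (continuous_norm).aestronglyMeasurable
    · refine Filter.Eventually.of_forall fun x => ?_
      simp only [Pi.add_apply, Real.norm_eq_abs, abs_of_nonneg (norm_nonneg x)]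
      nlinarith [norm_nonneg x, sq_nonneg (‖x‖ - 1)]
  -- each x ↦ ⟪x,b⟫ is integrable
  have hib : ∀ b : H, Integrable (fun x : H => (inner ℝ x b : ℝ)) P := by
    intro b
    refine Integrable.mono' (hint.mul_const ‖b‖) ?_ ?_
    · exact (continuous_id.inner continuous_const).aestronglyMeasurable
    · exact Filter.Eventually.of_forall fun x => by
        simpa using abs_real_inner_le_norm x b
  -- build the continuous linear functional
  set L' : H →ₗ[ℝ] ℝ :=
    { toFun := fun b => ∫ x, (inner ℝ x b : ℝ) ∂P
      map_add' := by
        intro b c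
        simp_rw [inner_add_right]
        exact integral_add (hib b) (hib c)
      map_smul' := by
        intro r b
        simp_rw [inner_smul_right, RingHom.id_apply]
        exact integral_const_mul r _ } with hL'
  have hLbound : ∀ b : H, ‖L' b‖ ≤ (∫ x, ‖x‖ ∂P) * ‖b‖ := by
    intro b
    calc ‖∫ x, (inner ℝ x b : ℝ) ∂P‖ ≤ ∫ x, ‖(inner ℝ x b : ℝ)‖ ∂P :=
          norm_integral_le_integral_norm _
      _ ≤ ∫ x, ‖x‖ * ‖b‖ ∂P := by
          refine integral_mono (hib b).norm (hint.mul_const ‖b‖) fun x => ?_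
          simpa using abs_real_inner_le_norm x b
      _ = (∫ x, ‖x‖ ∂P) * ‖b‖ := integral_mul_const _ _
  obtain ⟨m, hmrep⟩ : ∃ m : H, ∀ b : H, (inner ℝ m b : ℝ) = ∫ x, (inner ℝ x b : ℝ) ∂P := by
    set L : H →L[ℝ] ℝ := LinearMap.mkContinuous L' (∫ x, ‖x‖ ∂P) hLbound with hL
    refine ⟨(InnerProductSpace.toDual ℝ H).symm L, fun b => ?_⟩
    have h := InnerProductSpace.toDual_symm_apply (𝕜 := ℝ) (E := H) (x := b) (y := L)
    have hLb : L b = ∫ x, (inner ℝ x b : ℝ) ∂P := rfl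
    rw [h, hLb]
  have hmzero : m = 0 := by
    have h1 : ∫ y, ∫ x, (inner ℝ x y : ℝ) ∂P ∂P = ∫ y, (inner ℝ m y : ℝ) ∂P :=
      integral_congr_ae (Filter.Eventually.of_forall fun y => (hmrep y).symm)
    have h2 : ∫ y, (inner ℝ m y : ℝ) ∂P = (inner ℝ m m : ℝ) := by
      have hc : ∫ y, (inner ℝ m y : ℝ) ∂P = ∫ y, (inner ℝ y m : ℝ) ∂P := by
        simp_rw [real_inner_comm]
      rw [hc, ← hmrep m]
    have h3 : (inner ℝ m m : ℝ) = 0 := by rw [← h2, ← h1, hzero]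
    exact inner_self_eq_zero.mp h3
  intro b
  rw [← hmrep b, hmzero, inner_zero_left]
end
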